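/- Let k ≥ 1 be an integer, s > 1 a real number, and p ≥ 1 an integer (the stream position after which the threshold probability p* takes effect). Define the two-phase RSBF process: let X : ℕ → ℝ satisfy 0 ≤ X 1 ≤ 1, X (m+1) = (X m^{1/k}·(X m + (1 - X m)·(1 - 1/m)) + (1 - X m)·(1/m))^k for all integers m with 1 ≤ m ≤ p, and X (m+1) = (X m^{1/k}·(X m + (1 - X m)·(1 - 1/s)) + (1 - X m)·(1/s))^k for all integers m > p. Then the sequence X is monotonically nondecreasing and converges to 1 (i.e., X m → 1 as m → ∞). -/
import Mathlib

open Filter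

private lemma rsbf_root (k : ℕ) (hk : 1 ≤ k) (x : ℝ) (hx0 : 0 ≤ x) :
    (x ^ ((1 : ℝ) / k)) ^ k = x := by
  rw [← Real.rpow_natCast (x ^ ((1 : ℝ) / k)) k, ← Real.rpow_mul hx0,
    one_div, inv_mul_cancel₀ (Nat.cast_ne_zero.mpr (by omega) : (k : ℝ) ≠ 0),
    Real.rpow_one]

private lemma rsbf_step (k : ℕ) (hk : 1 ≤ k) (a x : ℝ) (ha : 0 < a) (ha1 : a ≤ 1)
    (hx0 : 0 ≤ x) (hx1 : x ≤ 1) :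
    x ≤ (x ^ ((1 : ℝ) / k) * (x + (1 - x) * (1 - a)) + (1 - x) * a) ^ k ∧
    (x ^ ((1 : ℝ) / k) * (x + (1 - x) * (1 - a)) + (1 - x) * a) ^ k ≤ 1 := by
  set y := x ^ ((1 : ℝ) / k) with hy
  have hy0 : 0 ≤ y := Real.rpow_nonneg hx0 _
  have hy1 : y ≤ 1 := Real.rpow_le_one hx0 hx1 (by positivity)
  have hyk : y ^ k = x := rsbf_root k hk x hx0
  set g := y * (x + (1 - x) * (1 - a)) + (1 - x) * a with hg
  have hgy : y ≤ g := by
    nlinarith [mul_nonneg (mul_nonneg (by linarith : (0:ℝ) ≤ 1 - x) ha.le)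
      (by linarith : (0:ℝ) ≤ 1 - y)]
  have hg1 : g ≤ 1 := by
    nlinarith [mul_nonneg (by linarith : (0:ℝ) ≤ 1 - y)
      (by nlinarith [mul_nonneg (by linarith : (0:ℝ) ≤ 1 - x) (by linarith : (0:ℝ) ≤ 1 - a)] :
        (0:ℝ) ≤ x + (1 - x) * (1 - a))]
  constructor
  · calc x = y ^ k := hyk.symm
      _ ≤ g ^ k := pow_le_pow_left₀ hy0 hgy k
  · exact pow_le_one₀ (le_trans hy0 hgy) hg1

private lemma rsbf_fixed (k : ℕ) (hk : 1 ≤ k) (a x : ℝ) (ha : 0 < a)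
    (hx0 : 0 ≤ x) (hx1 : x ≤ 1)
    (hfix : (x ^ ((1 : ℝ) / k) * (x + (1 - x) * (1 - a)) + (1 - x) * a) ^ k = x) :
    x = 1 := by
  obtain ⟨y, hy⟩ : ∃ y, y = x ^ ((1 : ℝ) / k) := ⟨_, rfl⟩
  obtain ⟨g, hg⟩ : ∃ g, g = y * (x + (1 - x) * (1 - a)) + (1 - x) * a := ⟨_, rfl⟩
  have hy0 : 0 ≤ y := hy ▸ Real.rpow_nonneg hx0 _
  have hyk : y ^ k = x := by rw [hy]; exact rsbf_root k hk x hx0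
  have hgk : g ^ k = x := by rw [hg, hy]; exact hfix
  have hgy : y ≤ g := by
    have hylt : y ≤ 1 := by rw [hy]; exact Real.rpow_le_one hx0 hx1 (by positivity)
    nlinarith [mul_nonneg (mul_nonneg (by linarith : (0:ℝ) ≤ 1 - x) ha.le)
      (by linarith : (0:ℝ) ≤ 1 - y)]
  have hgey : g = y := by
    by_contra hne
    have hlt : y < g := lt_of_le_of_ne hgy (Ne.symm hne)
    have := pow_lt_pow_left₀ hlt hy0 (by omega : k ≠ 0)
    rw [hyk, hgk] at this
    exact lt_irrefl _ this
  have h0 : (1 - x) * a * (1 - y) = 0 := by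
    have hd : (1 - x) * a * (1 - y) = g - y := by rw [hg]; ring
    rw [hgey] at hd; linarith
  rcases mul_eq_zero.mp h0 with h | h
  · rcases mul_eq_zero.mp h with h' | h'
    · linarith
    · exact absurd h' (ne_of_gt ha)
  · have hy1 : y = 1 := by linarith
    rw [← hyk, hy1, one_pow]

theorem rsbf_two_phase_monotone_tendsto_one (k : ℕ) (hk : 1 ≤ k) (s : ℝ) (hs : 1 < s)
    (p : ℕ) (hp : 1 ≤ p) (X : ℕ → ℝ) (hX0 : 0 ≤ X 1) (hX1 : X 1 ≤ 1)
    (hrec1 : ∀ m : ℕ, 1 ≤ m → m ≤ p →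
      X (m + 1) = ((X m) ^ ((1 : ℝ) / k) * (X m + (1 - X m) * (1 - 1 / (m : ℝ)))
        + (1 - X m) * (1 / (m : ℝ))) ^ k)
    (hrec2 : ∀ m : ℕ, p < m →
      X (m + 1) = ((X m) ^ ((1 : ℝ) / k) * (X m + (1 - X m) * (1 - 1 / s))
        + (1 - X m) * (1 / s)) ^ k) :
    (∀ m : ℕ, 1 ≤ m → X m ≤ X (m + 1)) ∧
    Filter.Tendsto X Filter.atTop (nhds 1) := by
  have hs0 : (0:ℝ) < 1 / s := by positivity
  have hs1 : (1:ℝ) / s ≤ 1 := by rw [div_le_one (by linarith)]; linarith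
  have hstep : ∀ m : ℕ, 1 ≤ m → 0 ≤ X m → X m ≤ 1 → X m ≤ X (m + 1) ∧ X (m + 1) ≤ 1 := by
    intro m hm h0 h1
    rcases le_or_gt m p with hmp | hmp
    · rw [hrec1 m hm hmp]
      have hm0 : (0:ℝ) < (m:ℝ) := by exact_mod_cast hm
      exact rsbf_step k hk (1 / (m:ℝ)) (X m) (by positivity)
        (by rw [div_le_one hm0]; exact_mod_cast hm) h0 h1
    · rw [hrec2 m hmp]
      exact rsbf_step k hk (1 / s) (X m) hs0 hs1 h0 h1
  have hbounds : ∀ m : ℕ, 1 ≤ m → 0 ≤ X m ∧ X m ≤ 1 := by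
    intro m hm
    induction m, hm using Nat.le_induction with
    | base => exact ⟨hX0, hX1⟩
    | succ n hn ih =>
      obtain ⟨h0, h1⟩ := ih
      obtain ⟨hle, hle1⟩ := hstep n hn h0 h1
      exact ⟨le_trans h0 hle, hle1⟩
  have hmono : ∀ m : ℕ, 1 ≤ m → X m ≤ X (m + 1) := fun m hm =>
    (hstep m hm (hbounds m hm).1 (hbounds m hm).2).1
  refine ⟨hmono, ?_⟩
  set Y : ℕ → ℝ := fun n => X (n + 1) with hY
  have hYmono : Monotone Y := monotone_nat_of_le_succ fun n => hmono (n + 1) (by omega)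
  have hYbdd : BddAbove (Set.range Y) :=
    ⟨1, by rintro _ ⟨n, rfl⟩; exact (hbounds (n + 1) (by omega)).2⟩
  set L : ℝ := ⨆ n, Y n with hLdef
  have hYtend : Tendsto Y atTop (nhds L) := tendsto_atTop_ciSup hYmono hYbdd
  have hXtend : Tendsto X atTop (nhds L) := (Filter.tendsto_add_atTop_iff_nat 1).mp hYtend
  have hL0 : 0 ≤ L := le_trans hX0 (le_ciSup hYbdd 0)
  have hL1 : L ≤ 1 := ciSup_le fun n => (hbounds (n + 1) (by omega)).2
  set F : ℝ → ℝ := fun x =>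
    (x ^ ((1 : ℝ) / k) * (x + (1 - x) * (1 - 1 / s)) + (1 - x) * (1 / s)) ^ k with hF
  have hFcont : ContinuousAt F L := by
    have h1 : ContinuousAt (fun x : ℝ => x ^ ((1 : ℝ) / k)) L :=
      Real.continuousAt_rpow_const L _ (Or.inr (by positivity))
    exact ((h1.mul (by fun_prop)).add (by fun_prop)).pow k
  have hfix : F L = L := by
    have h1 : Tendsto (fun n => F (X n)) atTop (nhds (F L)) := hFcont.tendsto.comp hXtend
    have heq : (fun n => F (X n)) =ᶠ[atTop] fun n => X (n + 1) := by
      filter_upwards [eventually_gt_atTop p] with n hn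
      exact (hrec2 n hn).symm
    exact tendsto_nhds_unique (h1.congr' heq) hYtend
  have hL : L = 1 := rsbf_fixed k hk (1 / s) L hs0 hL0 hL1 hfix
  rw [← hL]
  exact hXtend
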